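/- Let p be an odd prime and let λ be a self-conjugate partition of p-weight 2. Then none of the diagonal hook lengths h_λ(i,i) of λ is divisible by p; that is, every self-conjugate partition in a p-block of weight 2 is a p-BG-partition. -/
import Mathlib


namespace ArxivW2

/-- A partition of a natural number, given by its (weakly decreasing, finitely
supported) sequence of parts, `part i` being the `(i+1)`-st part. -/
structure PartitionNat : Type where
  part : ℕ → ℕ
  antitone : Antitone part
  finite_support : (Function.support part).Finite

namespace PartitionNat

/-- The rank `|λ|` of a partition: the sum of its parts. -/
noncomputable def size (μ : PartitionNat) : ℕ := ∑ᶠ i, μ.part i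

/-- The number of nonzero parts of a partition. -/
noncomputable def len (μ : PartitionNat) : ℕ := (Function.support μ.part).ncard

/-- The `(j+1)`-st part of the conjugate partition: `λ'_{j+1} = #{i : λ_i ≥ j+1}`. -/
noncomputable def conj (μ : PartitionNat) (j : ℕ) : ℕ := {i : ℕ | j + 1 ≤ μ.part i}.ncard

/-- A partition is self-conjugate if it equals its conjugate. -/
def SelfConj (μ : PartitionNat) : Prop := ∀ j, μ.part j = μ.conj j

/-- `(i, j)` (0-indexed) is a node of the Young diagram of `μ`. -/
def IsNode (μ : PartitionNat) (i j : ℕ) : Prop := j < μ.part i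

/-- The hook length of the (0-indexed) node `(i,j)`:
`h = λ_{i+1} + λ'_{j+1} − (i+1) − (j+1) + 1`. -/
noncomputable def hook (μ : PartitionNat) (i j : ℕ) : ℕ := μ.part i + μ.conj j - (i + j + 1)

/-- A partition is a `p`-core if no hook length of a node is divisible by `p`. -/
def IsCore (p : ℕ) (μ : PartitionNat) : Prop := ∀ i j, μ.IsNode i j → ¬ p ∣ μ.hook i j

/-- The `p`-weight of a partition: the number of nodes whose hook length is
divisible by `p`. -/
noncomputable def pweight (p : ℕ) (μ : PartitionNat) : ℕ :=
  {x : ℕ × ℕ | μ.IsNode x.1 x.2 ∧ p ∣ μ.hook x.1 x.2}.ncard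

/-- The `N`-bead beta-set `B_N(λ) = {λ_i + N − i : 1 ≤ i ≤ N}` of a partition
(meaningful when `N ≥ len λ`). -/
def betaSet (N : ℕ) (μ : PartitionNat) : Finset ℕ :=
  (Finset.range N).image fun i => μ.part i + (N - 1 - i)

/-- A partition is `p`-regular if no nonzero part is repeated `p` or more times. -/
def Regular (p : ℕ) (μ : PartitionNat) : Prop :=
  ∀ i, μ.part i ≠ 0 → μ.part (i + p - 1) < μ.part i

end PartitionNat

open PartitionNat

/-- `γ` is the `p`-core of `lam`: `γ` is a `p`-core, and for some `N` at least the
number of parts of both, the `N`-bead beta-sets of `lam` and `γ` have the same number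
of elements in each residue class mod `p`. -/
def HasCore (p : ℕ) (lam gam : PartitionNat) : Prop :=
  IsCore p gam ∧ ∃ N : ℕ, lam.len ≤ N ∧ gam.len ≤ N ∧ ∀ r : ℕ,
    ((betaSet N lam).filter fun b => b % p = r).card =
      ((betaSet N gam).filter fun b => b % p = r).card

/-- Membership in the `p`-block of weight `w` with `p`-core `gam`. -/
def InBlock (p w : ℕ) (gam lam : PartitionNat) : Prop :=
  lam.size = gam.size + w * p ∧ HasCore p lam gam

/-- The dominance order: `lam ⊴ mu`. -/
def Dom (lam mu : PartitionNat) : Prop :=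
  ∀ k : ℕ, ∑ i ∈ Finset.range k, lam.part i ≤ ∑ i ∈ Finset.range k, mu.part i

/-- `mu` is obtained from `lam` by removing a `p`-rim-hook of leg length `l`. -/
def RemoveHook (p : ℕ) (lam mu : PartitionNat) (l : ℕ) : Prop :=
  ∃ N b : ℕ, lam.len ≤ N ∧ mu.len ≤ N ∧ b ∈ betaSet N lam ∧ p ≤ b ∧
    b - p ∉ betaSet N lam ∧
    betaSet N mu = insert (b - p) (betaSet N lam \ {b}) ∧
    l = ((betaSet N lam).filter fun x => b - p < x ∧ x < b).card

/-- `lam` belongs to the set `∂_l` of the weight-2 block of `gam`: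
it lies in the block and some (equivalently, every) two-step `p`-rim-hook removal
sequence from `lam` down to `gam` has leg lengths `l₁, l₂` with `|l₁ − l₂| = l`. -/
def DelClass (p : ℕ) (gam : PartitionNat) (l : ℕ) (lam : PartitionNat) : Prop :=
  InBlock p 2 gam lam ∧ ∃ mu l1 l2, RemoveHook p lam mu l1 ∧ RemoveHook p mu gam l2 ∧
    max l1 l2 - min l1 l2 = l

/-- `ρ 0 < ρ 1 < ⋯ < ρ (p−1)` is the increasing enumeration of the maxima of the
residue classes mod `p` in the `N`-bead beta-set of `gam`. -/
def IsRho (p N : ℕ) (gam : PartitionNat) (ρ : ℕ → ℕ) : Prop :=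
  (∀ i j, i < j → j < p → ρ i < ρ j) ∧
  (∀ i, i < p → ρ i ∈ betaSet N gam ∧ ∀ b ∈ betaSet N gam, b % p = ρ i % p → b ≤ ρ i) ∧
  (∀ r, r < p → ∃ i, i < p ∧ ρ i % p = r)

/-- The beta-set of the partition `⟨i,j⟩` (`i < j`). -/
def pairBeta (p : ℕ) (B : Finset ℕ) (ρ : ℕ → ℕ) (i j : ℕ) : Finset ℕ :=
  (B \ {ρ i, ρ j}) ∪ {ρ i + p, ρ j + p}

/-- The beta-set of the partition `⟨i⟩`. -/
def oneBeta (p : ℕ) (B : Finset ℕ) (ρ : ℕ → ℕ) (i : ℕ) : Finset ℕ :=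
  (B \ {ρ i}) ∪ {ρ i + 2 * p}

/-- The beta-set of the partition `⟨i²⟩`. -/
def sqBeta (p : ℕ) (B : Finset ℕ) (ρ : ℕ → ℕ) (i : ℕ) : Finset ℕ :=
  (B \ {ρ i - p}) ∪ {ρ i + p}

/-- The pyramid entry `γ_{ij}` of the block, extended by `1` for `i > j` and `0`
for `j ≥ p`. -/
def pyr (p : ℕ) (ρ : ℕ → ℕ) (i j : ℕ) : ℕ :=
  if j < i then 1 else if p ≤ j then 0 else if ρ j - ρ i < p then 1 else 0

/-- The beta-set of Fayers' partition `⌈i,j⌋` (for `0 ≤ i ≤ j ≤ p−1`, `i < p−1`),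
defined by cases on the pyramid entries. -/
def fayersBeta (p : ℕ) (B : Finset ℕ) (ρ : ℕ → ℕ) (i j : ℕ) : Finset ℕ :=
  if i = j then
    (if pyr p ρ (i + 1) (i + 2) = 1 then pairBeta p B ρ (i + 1) (i + 2)
     else oneBeta p B ρ (i + 1))
  else
    if pyr p ρ i (j + 1) = 1 then pairBeta p B ρ i (j + 1)
    else if pyr p ρ i j = 1 then oneBeta p B ρ i
    else if pyr p ρ (i + 1) j = 1 then sqBeta p B ρ j
    else pairBeta p B ρ (i + 1) j

/-- The set of `p`-BG-partitions in the block of weight `w` with core `gam`: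
self-conjugate partitions in the block none of whose diagonal hook lengths is
divisible by `p`. -/
def BGset (p w : ℕ) (gam : PartitionNat) : Set PartitionNat :=
  {lam | InBlock p w gam lam ∧ SelfConj lam ∧ ∀ i, lam.IsNode i i → ¬ p ∣ lam.hook i i}


lemma aux_mem_lt_ncard {f : ℕ → ℕ} (hf : Antitone f)
    (hfin : (Function.support f).Finite) {i j : ℕ} (h : j + 1 ≤ f i) :
    i < {k : ℕ | j + 1 ≤ f k}.ncard := by
  have hsub : Set.Iic i ⊆ {k : ℕ | j + 1 ≤ f k} := fun k hk => le_trans h (hf hk)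
  have hfin' : {k : ℕ | j + 1 ≤ f k}.Finite := by
    refine hfin.subset fun k hk => ?_
    simp only [Function.mem_support]
    simp only [Set.mem_setOf_eq] at hk
    omega
  have h1 : (Set.Iic i).ncard = i + 1 := by
    rw [← Finset.coe_Iic, Set.ncard_coe_finset, Nat.card_Iic]
  have h2 := Set.ncard_le_ncard hsub hfin'
  omega

lemma aux_node_symm (lam : PartitionNat) (hsc : SelfConj lam) {i j : ℕ}
    (h : lam.IsNode i j) : lam.IsNode j i := by
  unfold PartitionNat.IsNode at *
  rw [hsc j]
  exact aux_mem_lt_ncard lam.antitone lam.finite_support h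

/-- a self-conjugate partition of `p`-weight 2 has no diagonal hook
length divisible by `p`, i.e. it is a `p`-BG-partition. -/
theorem stmt16 (p : ℕ) (hp : p.Prime) (hodd : Odd p)
    (lam : PartitionNat) (hsc : SelfConj lam) (hw : pweight p lam = 2) :
    ∀ i, lam.IsNode i i → ¬ p ∣ lam.hook i i := by
  intro a hnode hdvd
  set S : Set (ℕ × ℕ) := {x : ℕ × ℕ | lam.IsNode x.1 x.2 ∧ p ∣ lam.hook x.1 x.2} with hSdef
  have hS2 : S.ncard = 2 := hw
  rw [Set.ncard_eq_two] at hS2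
  obtain ⟨u, v, huv, hSuv⟩ := hS2
  have hsc' : ∀ j, lam.part j = lam.conj j := hsc
  have haa : ((a, a) : ℕ × ℕ) ∈ S := ⟨hnode, hdvd⟩
  -- extract the other element z with S = {(a,a), z}
  have hz : ∃ z : ℕ × ℕ, z ≠ (a, a) ∧ S = {(a, a), z} := by
    rw [hSuv] at haa
    rcases haa with h | h
    · exact ⟨v, by rw [← h] at huv; exact fun hc => huv hc.symm, by rw [hSuv, ← h]⟩
    · exact ⟨u, by rw [← h] at huv; exact huv, by rw [hSuv, ← h, Set.pair_comm]⟩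
  obtain ⟨⟨i, j⟩, hzne, hSz⟩ := hz
  have hzmem : ((i, j) : ℕ × ℕ) ∈ S := by rw [hSz]; right; rfl
  have hmemS : ∀ w : ℕ × ℕ, w ∈ S → w = (a, a) ∨ w = (i, j) := by
    intro w hw'; rw [hSz] at hw'; exact hw'
  have hp2 : ¬ p ∣ 2 := by
    intro hd
    have := (Nat.prime_dvd_prime_iff_eq hp Nat.prime_two).mp hd
    rw [Nat.odd_iff] at hodd
    omega
  by_cases hij : i = j
  · -- the other node is diagonal, (b,b) with b ≠ a
    subst hij
    have hba : i ≠ a := fun h => hzne (by rw [h])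
    -- get ordered pair c < d of diagonal bad nodes
    obtain ⟨c, d, hcd, hcc, hdd, hdvdc, hdvdd⟩ :
        ∃ c d : ℕ, c < d ∧ c < lam.part c ∧ d < lam.part d ∧
          p ∣ lam.hook c c ∧ p ∣ lam.hook d d := by
      rcases Nat.lt_or_ge a i with h | h
      · exact ⟨a, i, h, hnode, hzmem.1, hdvd, hzmem.2⟩
      · exact ⟨i, a, lt_of_le_of_ne h hba, hzmem.1, hnode, hzmem.2, hdvd⟩
    have hanti : lam.part d ≤ lam.part c := lam.antitone (le_of_lt hcd)
    have e1 : lam.hook c c = 2 * lam.part c - (2 * c + 1) := by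
      simp only [PartitionNat.hook, ← hsc']; omega
    have e2 : lam.hook d d = 2 * lam.part d - (2 * d + 1) := by
      simp only [PartitionNat.hook, ← hsc']; omega
    have e3 : lam.hook c d = lam.part c + lam.part d - (c + d + 1) := by
      simp only [PartitionNat.hook, ← hsc']
    have key : lam.hook c c + lam.hook d d = 2 * lam.hook c d := by
      rw [e1, e2, e3]; omega
    have hdvd2 : p ∣ 2 * lam.hook c d := key ▸ dvd_add hdvdc hdvdd
    have hdvdcd : p ∣ lam.hook c d := ((Nat.Prime.dvd_mul hp).mp hdvd2).resolve_left hp2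
    have hnodecd : lam.IsNode c d := lt_of_lt_of_le hdd hanti
    have := hmemS (c, d) ⟨hnodecd, hdvdcd⟩
    rcases this with h | h <;>
      · rw [Prod.mk.injEq] at h; omega
  · -- the other node is off-diagonal: its transpose is a third bad node
    have hnodeji : lam.IsNode j i := aux_node_symm lam hsc hzmem.1
    have hookji : lam.hook j i = lam.hook i j := by
      simp only [PartitionNat.hook, ← hsc']; omega
    have hdvdji : p ∣ lam.hook j i := hookji ▸ hzmem.2
    have := hmemS (j, i) ⟨hnodeji, hdvdji⟩
    rcases this with h | h
    · rw [Prod.mk.injEq] at h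
      exact hzne (by rw [Prod.mk.injEq]; omega)
    · rw [Prod.mk.injEq] at h; exact hij (by omega)

end ArxivW2
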